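/- Let (τᵢ⁺)ᵢ, (τᵢ⁻)ᵢ be i.i.d. sequences of positive integrable random variables with means m⁺, m⁻, and let successes occur with probability p⁺ ∈ (0,1) independently. Let N_t⁺, N_t⁻ count successes and failures among trades completed by time t in the associated renewal process. Then almost surely N_t⁺/(N_t⁺+N_t⁻) → p⁺ and ((α⁺N_t⁺ + α⁻N_t⁻)/(Σᵢ₌₁^{N_t⁺}τᵢ⁺ + Σᵢ₌₁^{N_t⁻}τᵢ⁻)) → (p⁺α⁺ + (1-p⁺)α⁻)/(p⁺m⁺ + (1-p⁺)m⁻) as t → ∞, for any real α⁺, α⁻ with p⁺m⁺ + (1-p⁺)m⁻ > 0. -/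

import Mathlib

open MeasureTheory ProbabilityTheory Filter

open Filter

lemma det_lemma (τp τm : ℕ → ℝ) (b : ℕ → Bool) (N : ℝ → ℕ) (Np Nm : ℝ → ℕ)
    (pp mp mm c αp αm : ℝ)
    (hpp : pp ∈ Set.Ioo (0:ℝ) 1)
    (hmean : 0 < pp * mp + (1 - pp) * mm)
    (hc : 0 < c)
    (h1 : Tendsto (fun n : ℕ => (∑ i ∈ Finset.range n, (if b i then (1:ℝ) else 0)) / n)
      atTop (nhds pp))
    (h2 : Tendsto (fun n : ℕ => (∑ i ∈ Finset.range n, τp i) / n) atTop (nhds mp))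
    (h3 : Tendsto (fun n : ℕ => (∑ i ∈ Finset.range n, τm i) / n) atTop (nhds mm))
    (h4 : Tendsto (fun n : ℕ => (∑ i ∈ Finset.range n, (if b i then τp i else τm i)) / n)
      atTop (nhds c))
    (hposp : ∀ i, 0 < τp i) (hposm : ∀ i, 0 < τm i)
    (hN : ∀ t, N t = sSup {n : ℕ | (∑ i ∈ Finset.range n, (if b i then τp i else τm i)) ≤ t})
    (hNp : ∀ t, Np t = ((Finset.range (N t)).filter fun i => b i = true).card)
    (hNm : ∀ t, Nm t = ((Finset.range (N t)).filter fun i => b i = false).card) :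
    Tendsto (fun t : ℝ => (Np t : ℝ) / ((Np t : ℝ) + (Nm t : ℝ))) atTop (nhds pp) ∧
    Tendsto (fun t : ℝ =>
        (αp * (Np t : ℝ) + αm * (Nm t : ℝ)) /
          ((∑ i ∈ Finset.range (Np t), τp i) + ∑ i ∈ Finset.range (Nm t), τm i))
      atTop (nhds ((pp * αp + (1 - pp) * αm) / (pp * mp + (1 - pp) * mm))) := by
  set X : ℕ → ℝ := fun i => if b i then τp i else τm i with hX
  set S : ℕ → ℝ := fun n => ∑ i ∈ Finset.range n, X i with hS
  have hXpos : ∀ i, 0 < X i := fun i => by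
    by_cases h : b i <;> simp [hX, h, hposp i, hposm i]
  -- S tends to infinity
  have hStop : Tendsto S atTop atTop := by
    have : Tendsto (fun n : ℕ => (S n / n) * n) atTop atTop :=
      h4.pos_mul_atTop hc tendsto_natCast_atTop_atTop
    refine this.congr' ?_
    filter_upwards [eventually_ge_atTop 1] with n hn
    have : (n : ℝ) ≠ 0 := by positivity
    field_simp
  -- the set defining N is bounded above and N is its max
  have hbdd : ∀ t : ℝ, BddAbove {n : ℕ | S n ≤ t} := by
    intro t
    obtain ⟨m, hm⟩ := (hStop.eventually (eventually_gt_atTop t)).exists_forall_of_atTop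
    refine ⟨m, fun n hn => ?_⟩
    by_contra h
    exact absurd (hn : S n ≤ t) (not_le.2 (hm n (le_of_not_ge h)))
  have hNge : ∀ n : ℕ, ∀ᶠ t : ℝ in atTop, n ≤ N t := by
    intro n
    filter_upwards [eventually_ge_atTop (S n)] with t ht
    rw [hN t]
    exact le_csSup (by simpa [hS] using hbdd t) (by simpa [hS] using ht)
  have hNtend : Tendsto (fun t => N t) atTop atTop := tendsto_atTop.2 hNge
  have hNtendR : Tendsto (fun t => (N t : ℝ)) atTop atTop :=
    tendsto_natCast_atTop_atTop.comp hNtend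
  -- Np + Nm = N
  have hsplit : ∀ t, Np t + Nm t = N t := by
    intro t
    rw [hNp, hNm, Finset.card_filter, Finset.card_filter, ← Finset.sum_add_distrib]
    have hone : ∀ i ∈ Finset.range (N t),
        ((if b i = true then 1 else 0) + if b i = false then 1 else 0) = 1 := by
      intro i _; cases h : b i <;> simp [h]
    rw [Finset.sum_congr rfl hone, Finset.sum_const, smul_eq_mul, mul_one, Finset.card_range]
  have hsplitR : ∀ t, (Np t : ℝ) + (Nm t : ℝ) = (N t : ℝ) := by
    intro t; exact_mod_cast congrArg (Nat.cast (R := ℝ)) (hsplit t)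
  -- Np as a sum of indicators
  have hNpsum : ∀ t, (Np t : ℝ) = ∑ i ∈ Finset.range (N t), (if b i then (1:ℝ) else 0) := by
    intro t
    rw [hNp, Finset.card_filter]
    push_cast
    simp
  -- Np / N → pp
  have hA : Tendsto (fun t : ℝ => (Np t : ℝ) / (N t : ℝ)) atTop (nhds pp) := by
    have := h1.comp hNtend
    refine this.congr fun t => ?_
    simp only [Function.comp_apply, hNpsum t]
  have claim1 : Tendsto (fun t : ℝ => (Np t : ℝ) / ((Np t : ℝ) + (Nm t : ℝ)))
      atTop (nhds pp) := by
    refine hA.congr fun t => ?_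
    rw [hsplitR t]
  -- Nm / N → 1 - pp
  have hAm : Tendsto (fun t : ℝ => (Nm t : ℝ) / (N t : ℝ)) atTop (nhds (1 - pp)) := by
    have : Tendsto (fun t : ℝ => 1 - (Np t : ℝ) / (N t : ℝ)) atTop (nhds (1 - pp)) :=
      tendsto_const_nhds.sub hA
    refine this.congr' ?_
    filter_upwards [hNge 1] with t ht
    have hN0 : (N t : ℝ) ≠ 0 := by positivity
    have := hsplitR t
    field_simp
    linarith
  -- Np, Nm tend to infinity
  have hNptend : Tendsto (fun t => Np t) atTop atTop := by
    rw [← tendsto_natCast_atTop_iff (R := ℝ)]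
    have : Tendsto (fun t : ℝ => ((Np t : ℝ) / (N t : ℝ)) * (N t : ℝ)) atTop atTop :=
      hA.pos_mul_atTop hpp.1 hNtendR
    refine this.congr' ?_
    filter_upwards [hNge 1] with t ht
    have hN0 : (N t : ℝ) ≠ 0 := by positivity
    field_simp
  have hNmtend : Tendsto (fun t => Nm t) atTop atTop := by
    rw [← tendsto_natCast_atTop_iff (R := ℝ)]
    have : Tendsto (fun t : ℝ => ((Nm t : ℝ) / (N t : ℝ)) * (N t : ℝ)) atTop atTop :=
      hAm.pos_mul_atTop (by linarith [hpp.2]) hNtendR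
    refine this.congr' ?_
    filter_upwards [hNge 1] with t ht
    have hN0 : (N t : ℝ) ≠ 0 := by positivity
    field_simp
  -- numerator / N
  have hnum : Tendsto (fun t : ℝ => (αp * (Np t : ℝ) + αm * (Nm t : ℝ)) / (N t : ℝ))
      atTop (nhds (pp * αp + (1 - pp) * αm)) := by
    have : Tendsto (fun t : ℝ => αp * ((Np t : ℝ) / (N t : ℝ)) + αm * ((Nm t : ℝ) / (N t : ℝ)))
        atTop (nhds (αp * pp + αm * (1 - pp))) :=
      (tendsto_const_nhds.mul hA).add (tendsto_const_nhds.mul hAm)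
    rw [show pp * αp + (1 - pp) * αm = αp * pp + αm * (1 - pp) by ring]
    refine this.congr fun t => ?_
    ring
  -- denominator / N
  have hden : Tendsto (fun t : ℝ =>
      ((∑ i ∈ Finset.range (Np t), τp i) + ∑ i ∈ Finset.range (Nm t), τm i) / (N t : ℝ))
      atTop (nhds (pp * mp + (1 - pp) * mm)) := by
    have hp : Tendsto (fun t : ℝ => (∑ i ∈ Finset.range (Np t), τp i) / (Np t : ℝ))
        atTop (nhds mp) := h2.comp hNptend
    have hm : Tendsto (fun t : ℝ => (∑ i ∈ Finset.range (Nm t), τm i) / (Nm t : ℝ))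
        atTop (nhds mm) := h3.comp hNmtend
    have : Tendsto (fun t : ℝ =>
        ((∑ i ∈ Finset.range (Np t), τp i) / (Np t : ℝ)) * ((Np t : ℝ) / (N t : ℝ))
        + ((∑ i ∈ Finset.range (Nm t), τm i) / (Nm t : ℝ)) * ((Nm t : ℝ) / (N t : ℝ)))
        atTop (nhds (mp * pp + mm * (1 - pp))) := (hp.mul hA).add (hm.mul hAm)
    rw [show pp * mp + (1 - pp) * mm = mp * pp + mm * (1 - pp) by ring]
    refine this.congr' ?_
    filter_upwards [hNptend.eventually (eventually_ge_atTop 1),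
      hNmtend.eventually (eventually_ge_atTop 1)] with t htp htm
    have h1 : (Np t : ℝ) ≠ 0 := by positivity
    have h2 : (Nm t : ℝ) ≠ 0 := by positivity
    field_simp
  refine ⟨claim1, ?_⟩
  have := hnum.div hden (ne_of_gt hmean)
  refine this.congr' ?_
  filter_upwards [hNge 1] with t ht
  have hN0 : (N t : ℝ) ≠ 0 := by positivity
  simp only [Pi.div_apply]
  rw [div_div_div_cancel_right₀ hN0]


theorem long_run_return_as_convergence
    {Ω : Type*} [MeasurableSpace Ω] (μ : Measure Ω) [IsProbabilityMeasure μ]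
    (τp τm : ℕ → Ω → ℝ) (B : ℕ → Ω → Bool)
    (hmeas : ∀ i, Measurable (fun ω => (τp i ω, τm i ω, B i ω)))
    -- the trades are i.i.d.:
    (hindep : iIndepFun
      (fun i ω => (τp i ω, τm i ω, B i ω)) μ)
    (hident : ∀ i, IdentDistrib (fun ω => (τp i ω, τm i ω, B i ω))
      (fun ω => (τp 0 ω, τm 0 ω, B 0 ω)) μ μ)
    -- positive integrable durations with means m⁺, m⁻:
    (hposp : ∀ i, ∀ᵐ ω ∂μ, 0 < τp i ω) (hposm : ∀ i, ∀ᵐ ω ∂μ, 0 < τm i ω)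
    (hintp : ∀ i, Integrable (τp i) μ) (hintm : ∀ i, Integrable (τm i) μ)
    (mp mm : ℝ) (hmp : ∀ i, ∫ ω, τp i ω ∂μ = mp) (hmm : ∀ i, ∫ ω, τm i ω ∂μ = mm)
    -- success probability p⁺:
    (pp : ℝ) (hpp : pp ∈ Set.Ioo (0 : ℝ) 1)
    (hB : ∀ i, μ {ω | B i ω = true} = ENNReal.ofReal pp)
    -- renewal counting processes:
    (N : ℝ → Ω → ℕ)
    (hN : ∀ t ω, N t ω =
      sSup {n : ℕ | (∑ i ∈ Finset.range n, (if B i ω then τp i ω else τm i ω)) ≤ t})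
    (Np Nm : ℝ → Ω → ℕ)
    (hNp : ∀ t ω, Np t ω = ((Finset.range (N t ω)).filter fun i => B i ω = true).card)
    (hNm : ∀ t ω, Nm t ω = ((Finset.range (N t ω)).filter fun i => B i ω = false).card)
    (αp αm : ℝ) (hmean : 0 < pp * mp + (1 - pp) * mm) :
    ∀ᵐ ω ∂μ,
      Tendsto (fun t : ℝ => (Np t ω : ℝ) / ((Np t ω : ℝ) + (Nm t ω : ℝ)))
        atTop (nhds pp) ∧
      Tendsto (fun t : ℝ =>
          (αp * (Np t ω : ℝ) + αm * (Nm t ω : ℝ)) /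
            ((∑ i ∈ Finset.range (Np t ω), τp i ω) + ∑ i ∈ Finset.range (Nm t ω), τm i ω))
        atTop (nhds ((pp * αp + (1 - pp) * αm) / (pp * mp + (1 - pp) * mm))) := by
  set Z : ℕ → Ω → ℝ × ℝ × Bool := fun i ω => (τp i ω, τm i ω, B i ω) with hZ
  -- generic strong law for functions of the i.i.d. triples
  have slln : ∀ (f : ℝ × ℝ × Bool → ℝ), Measurable f →
      Integrable (fun ω => f (Z 0 ω)) μ →
      ∀ᵐ ω ∂μ, Tendsto (fun n : ℕ => (∑ i ∈ Finset.range n, f (Z i ω)) / n) atTop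
        (nhds (∫ ω, f (Z 0 ω) ∂μ)) := by
    intro f hf hint
    exact strong_law_ae_real (fun i ω => f (Z i ω)) hint
      (fun i j hij => (hindep.indepFun hij).comp hf hf)
      (fun i => (hident i).comp hf)
  -- the relevant measurable functions
  have hsetb : MeasurableSet {x : ℝ × ℝ × Bool | x.2.2 = true} :=
    (measurable_snd.comp measurable_snd) (measurableSet_singleton true)
  have hfb : Measurable (fun x : ℝ × ℝ × Bool => if x.2.2 = true then (1:ℝ) else 0) :=
    Measurable.ite hsetb measurable_const measurable_const
  have hfX : Measurable (fun x : ℝ × ℝ × Bool => if x.2.2 = true then x.1 else x.2.1) :=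
    Measurable.ite hsetb measurable_fst (measurable_fst.comp measurable_snd)
  have hBmeas : ∀ i, Measurable (B i) :=
    fun i => (measurable_snd.comp measurable_snd).comp (hmeas i)
  have hBset : MeasurableSet {ω | B 0 ω = true} := hBmeas 0 (measurableSet_singleton true)
  -- indicator integrability and integral
  have hbint : Integrable (fun ω => if B 0 ω = true then (1:ℝ) else 0) μ := by
    refine (integrable_const (1:ℝ)).mono' ?_ ?_
    · exact (hfb.comp (hmeas 0)).aestronglyMeasurable
    · filter_upwards with ω
      by_cases h : B 0 ω = true <;> simp [h]
  have hbmean : ∫ ω, (if B 0 ω = true then (1:ℝ) else 0) ∂μ = pp := by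
    have : (fun ω => if B 0 ω = true then (1:ℝ) else 0)
        = Set.indicator {ω | B 0 ω = true} (fun _ => (1:ℝ)) := by
      funext ω
      simp [Set.indicator_apply, Set.mem_setOf_eq]
    rw [this, integral_indicator_const (1:ℝ) hBset, smul_eq_mul, mul_one, measureReal_def, hB 0,
      ENNReal.toReal_ofReal hpp.1.le]
  -- integrability of the duration of each trade
  have hXint : Integrable (fun ω => if B 0 ω = true then τp 0 ω else τm 0 ω) μ := by
    refine ((hintp 0).abs.add (hintm 0).abs).mono' ?_ ?_
    · exact (hfX.comp (hmeas 0)).aestronglyMeasurable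
    · filter_upwards with ω
      by_cases h : B 0 ω = true <;>
        simp [h, Real.norm_eq_abs, abs_nonneg, le_add_of_nonneg_right, le_add_of_nonneg_left]
  -- positivity of mean duration
  have hXpos : ∀ᵐ ω ∂μ, 0 < (if B 0 ω = true then τp 0 ω else τm 0 ω) := by
    filter_upwards [hposp 0, hposm 0] with ω h1 h2
    by_cases h : B 0 ω = true <;> simp [h, h1, h2]
  set c : ℝ := ∫ ω, (if B 0 ω = true then τp 0 ω else τm 0 ω) ∂μ with hcdef
  have hc : 0 < c := by
    rw [hcdef, MeasureTheory.integral_pos_iff_support_of_nonneg_ae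
      (by filter_upwards [hXpos] with ω h using h.le) hXint]
    have hcompl : μ (Function.support fun ω => if B 0 ω = true then τp 0 ω else τm 0 ω)ᶜ = 0 := by
      refine measure_mono_null ?_ (ae_iff.1 hXpos)
      intro ω hω
      simp only [Set.mem_compl_iff, Function.mem_support, not_not] at hω
      simp [hω]
    by_contra h
    have h0 : μ (Function.support fun ω => if B 0 ω = true then τp 0 ω else τm 0 ω) = 0 :=
      by simpa using h
    have := measure_union_le (μ := μ)
      (Function.support fun ω => if B 0 ω = true then τp 0 ω else τm 0 ω)
      (Function.support fun ω => if B 0 ω = true then τp 0 ω else τm 0 ω)ᶜ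
    rw [Set.union_compl_self, h0, hcompl, measure_univ] at this
    simp at this
  -- the four strong laws
  have s1 := slln (fun x => if x.2.2 = true then (1:ℝ) else 0) hfb hbint
  have s2 := slln (fun x => x.1) measurable_fst (hintp 0)
  have s3 := slln (fun x => x.2.1) (measurable_fst.comp measurable_snd) (hintm 0)
  have s4 := slln (fun x => if x.2.2 = true then x.1 else x.2.1) hfX hXint
  rw [show (∫ ω, (Z 0 ω).1 ∂μ) = mp from hmp 0] at s2
  rw [show (∫ ω, (Z 0 ω).2.1 ∂μ) = mm from hmm 0] at s3
  rw [show (∫ ω, (if (Z 0 ω).2.2 = true then (1:ℝ) else 0) ∂μ) = pp from hbmean] at s1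
  have hpos : ∀ᵐ ω ∂μ, ∀ i, 0 < τp i ω ∧ 0 < τm i ω := by
    rw [ae_all_iff]
    intro i
    filter_upwards [hposp i, hposm i] with ω h1 h2 using ⟨h1, h2⟩
  filter_upwards [s1, s2, s3, s4, hpos] with ω h1 h2 h3 h4 hposω
  exact det_lemma (fun i => τp i ω) (fun i => τm i ω) (fun i => B i ω)
    (fun t => N t ω) (fun t => Np t ω) (fun t => Nm t ω) pp mp mm c αp αm
    hpp hmean hc h1 h2 h3 h4 (fun i => (hposω i).1) (fun i => (hposω i).2)
    (fun t => hN t ω) (fun t => hNp t ω) (fun t => hNm t ω)
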